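/- For arbitrary positive costs c, the minimum expected evaluation cost of the unanimous vote function u satisfies OPT(u) = min over i ∈ Fin n of [ c i + (1 − p i)·A_i + p i·B_i ], where, listing the indices other than i as j₁,…,j_{n−1} in nondecreasing order of c j / p j, A_i = Σ_{t=1}^{n−1} c(j_t)·∏_{s<t} (1 − p(j_s)), and, listing the indices other than i as j'₁,…,j'_{n−1} in nondecreasing order of c j / (1 − p j), B_i = Σ_{t=1}^{n−1} c(j'_t)·∏_{s<t} p(j'_s). That is, an optimal adaptive strategy queries some first bit i, then queries the remaining bits in nondecreasing c/p order until a true bit is found if bit i was false, and in nondecreasing c/(1−p) order until a false bit is found if bit i was true. -/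

import Mathlib

open Finset

/-- Number of true bits of an assignment. -/
def N1 {n : ℕ} (a : Fin n → Bool) : ℕ :=
  (Finset.univ.filter (fun i => a i = true)).card

/-- Probability of an assignment. -/
noncomputable def pr {n : ℕ} (p : Fin n → ℝ) (a : Fin n → Bool) : ℝ :=
  ∏ i, if a i then p i else 1 - p i
/-- Binary decision trees over `n` bits, with natural-number leaf labels. -/
inductive DTree (n : ℕ) : Type where
  | leaf : ℕ → DTree n
  | node : Fin n → DTree n → DTree n → DTree n

namespace DTree

/-- Output of the tree on assignment `a`. -/
def eval {n : ℕ} : DTree n → (Fin n → Bool) → ℕ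
  | .leaf v, _ => v
  | .node i t0 t1, a => if a i then eval t1 a else eval t0 a

/-- Total cost of the queries made on assignment `a`. -/
noncomputable def cost {n : ℕ} (c : Fin n → ℝ) : DTree n → (Fin n → Bool) → ℝ
  | .leaf _, _ => 0
  | .node i t0 t1, a => c i + (if a i then cost c t1 a else cost c t0 a)

/-- The list of indices queried on assignment `a`, in order. -/
def path {n : ℕ} : DTree n → (Fin n → Bool) → List (Fin n)
  | .leaf _, _ => []
  | .node i t0 t1, a => i :: (if a i then path t1 a else path t0 a)

/-- No index occurs twice on any root-to-leaf path (given already-used indices). -/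
def Proper {n : ℕ} : DTree n → Finset (Fin n) → Prop
  | .leaf _, _ => True
  | .node i t0 t1, used =>
      i ∉ used ∧ Proper t0 (insert i used) ∧ Proper t1 (insert i used)

/-- Every root-to-leaf path queries all `n` indices (and no repeats). -/
def Full {n : ℕ} : DTree n → Finset (Fin n) → Prop
  | .leaf _, used => used = Finset.univ
  | .node i t0 t1, used =>
      i ∉ used ∧ Full t0 (insert i used) ∧ Full t1 (insert i used)

end DTree
/-- Expected-cost-minimizing value over all decision trees evaluating `h`. -/
noncomputable def OPTcost {n : ℕ} (p c : Fin n → ℝ) (h : (Fin n → Bool) → ℕ) : ℝ :=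
  sInf {x : ℝ | ∃ T : DTree n, T.Proper ∅ ∧ (∀ a, T.eval a = h a) ∧
    x = ∑ a : Fin n → Bool, T.cost c a * pr p a}

/-- `chainCost c q [j₁,…,jₘ] = Σ_t c jₜ · Π_{s<t} q jₛ`: expected cost of querying the
listed bits in order, continuing past each bit with probability `q` of that bit. -/
noncomputable def chainCost {n : ℕ} (c q : Fin n → ℝ) : List (Fin n) → ℝ
  | [] => 0
  | i :: l => c i + q i * chainCost c q l

/-- The unanimous vote function: 2 if all bits true, 0 if all false, 1 otherwise. -/
def uvote {n : ℕ} (a : Fin n → Bool) : ℕ :=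
  if ∀ i, a i = true then 2 else if ∀ i, a i = false then 0 else 1

namespace UVaux

variable {n : ℕ}

/-- Labels (queried indices) of a tree. -/
def labels : DTree n → Finset (Fin n)
  | .leaf _ => ∅
  | .node i t0 t1 => insert i (labels t0 ∪ labels t1)

lemma eval_update (t : DTree n) : ∀ (i : Fin n), i ∉ labels t →
    ∀ (a : Fin n → Bool) (b : Bool), t.eval (Function.update a i b) = t.eval a := by
  induction t with
  | leaf v => intro _ _ _ _; rfl
  | node j t0 t1 ih0 ih1 =>
    intro i hi a b
    simp only [labels, Finset.mem_insert, Finset.mem_union, not_or] at hi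
    obtain ⟨hij, h0, h1⟩ := hi
    have hji : j ≠ i := fun h => hij h.symm
    simp only [DTree.eval, Function.update_of_ne hji]
    cases h : a j <;> simp [h, ih0 i h0 a b, ih1 i h1 a b]

lemma cost_update (c : Fin n → ℝ) (t : DTree n) : ∀ (i : Fin n), i ∉ labels t →
    ∀ (a : Fin n → Bool) (b : Bool), t.cost c (Function.update a i b) = t.cost c a := by
  induction t with
  | leaf v => intro _ _ _ _; rfl
  | node j t0 t1 ih0 ih1 =>
    intro i hi a b
    simp only [labels, Finset.mem_insert, Finset.mem_union, not_or] at hi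
    obtain ⟨hij, h0, h1⟩ := hi
    have hji : j ≠ i := fun h => hij h.symm
    simp only [DTree.cost, Function.update_of_ne hji]
    cases h : a j <;> simp [h, ih0 i h0 a b, ih1 i h1 a b]

lemma proper_labels (t : DTree n) : ∀ (used : Finset (Fin n)), t.Proper used →
    ∀ j ∈ used, j ∉ labels t := by
  induction t with
  | leaf v => intro _ _ j _; simp [labels]
  | node i t0 t1 ih0 ih1 =>
    intro used hP j hj
    simp only [DTree.Proper] at hP
    obtain ⟨hi, h0, h1⟩ := hP
    simp only [labels, Finset.mem_insert, Finset.mem_union, not_or]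
    exact ⟨fun h => hi (h ▸ hj), ih0 _ h0 j (Finset.mem_insert_of_mem hj),
      ih1 _ h1 j (Finset.mem_insert_of_mem hj)⟩

lemma cost_nonneg (c : Fin n → ℝ) (hc : ∀ i, 0 < c i) (t : DTree n) (a : Fin n → Bool) :
    0 ≤ t.cost c a := by
  induction t with
  | leaf v => simp [DTree.cost]
  | node i t0 t1 ih0 ih1 =>
    simp only [DTree.cost]
    have h2 : 0 ≤ (if a i then t1.cost c a else t0.cost c a) := by
      cases h : a i
      · simpa using ih0
      · simpa using ih1
    linarith [hc i]

lemma pr_nonneg (p : Fin n → ℝ) (hp : ∀ i, 0 < p i ∧ p i < 1) (a : Fin n → Bool) :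
    0 ≤ pr p a := by
  unfold pr
  refine Finset.prod_nonneg fun i _ => ?_
  rcases hp i with ⟨h1, h2⟩
  cases h : a i <;> simp <;> linarith

lemma Etree_nonneg (p c : Fin n → ℝ) (hp : ∀ i, 0 < p i ∧ p i < 1) (hc : ∀ i, 0 < c i)
    (t : DTree n) : 0 ≤ ∑ a : Fin n → Bool, t.cost c a * pr p a :=
  Finset.sum_nonneg fun a _ => mul_nonneg (cost_nonneg c hc t a) (pr_nonneg p hp a)

lemma sum_pr (p : Fin n → ℝ) : ∑ a : Fin n → Bool, pr p a = 1 := by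
  classical
  have h : (∏ i : Fin n, ∑ b : Bool, (if b then p i else 1 - p i))
      = ∑ a ∈ Fintype.piFinset (fun _ : Fin n => (Finset.univ : Finset Bool)),
        ∏ i, (if a i then p i else 1 - p i) := Finset.prod_univ_sum _ _
  simp only [Fintype.piFinset_univ] at h
  simp only [pr]
  rw [← h]
  refine Finset.prod_eq_one fun i _ => ?_
  rw [Fintype.sum_bool]
  simp

lemma pr_update (p : Fin n → ℝ) (a : Fin n → Bool) (i : Fin n) (b : Bool) :
    pr p (Function.update a i b) * (if a i then p i else 1 - p i)
      = pr p a * (if b then p i else 1 - p i) := by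
  classical
  have key : ∀ (x : Fin n → Bool), pr p x = (if x i then p i else 1 - p i) *
      ∏ j ∈ Finset.univ.erase i, (if x j then p j else 1 - p j) :=
    fun x => (Finset.mul_prod_erase Finset.univ _ (Finset.mem_univ i)).symm
  rw [key (Function.update a i b), key a]
  have h1 : (∏ j ∈ Finset.univ.erase i, (if Function.update a i b j then p j else 1 - p j))
      = ∏ j ∈ Finset.univ.erase i, (if a j then p j else 1 - p j) :=
    Finset.prod_congr rfl fun j hj => by
      rw [Function.update_of_ne (Finset.ne_of_mem_erase hj)]
  rw [h1, Function.update_self]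
  ring

lemma condSum (p : Fin n → ℝ) (i : Fin n) (g : (Fin n → Bool) → ℝ)
    (hg : ∀ a b, g (Function.update a i b) = g a) (b : Bool) :
    ∑ a : Fin n → Bool, (if a i = b then g a else 0) * pr p a
      = (if b then p i else 1 - p i) * ∑ a : Fin n → Bool, g a * pr p a := by
  classical
  have hinv : Function.Involutive (fun x : Fin n → Bool => Function.update x i (!(x i))) := by
    intro x; funext j
    by_cases h : j = i
    · subst h; simp
    · simp [Function.update_of_ne h]
  have key : (∑ a : Fin n → Bool, (if a i = true then g a else 0) * pr p a) * (1 - p i)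
      = (∑ a : Fin n → Bool, (if a i = false then g a else 0) * pr p a) * p i := by
    rw [Finset.sum_mul, Finset.sum_mul,
      ← Equiv.sum_comp (Function.Involutive.toPerm _ hinv)
        (fun a : Fin n → Bool => (if a i = true then g a else 0) * pr p a * (1 - p i))]
    refine Finset.sum_congr rfl fun a _ => ?_
    have hPerm : (Function.Involutive.toPerm _ hinv) a = Function.update a i (!(a i)) := rfl
    rw [hPerm]
    cases h : a i
    · have hpr := pr_update p a i true
      rw [h] at hpr
      simp only [if_true, if_false, Bool.false_eq_true] at hpr
      simp only [h, Bool.not_false, Function.update_self, hg, if_pos rfl]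
      simp only [if_true]
      linear_combination (g a) * hpr
    · simp [h]
  have hsum : (∑ a : Fin n → Bool, (if a i = true then g a else 0) * pr p a)
      + (∑ a : Fin n → Bool, (if a i = false then g a else 0) * pr p a)
      = ∑ a : Fin n → Bool, g a * pr p a := by
    rw [← Finset.sum_add_distrib]
    refine Finset.sum_congr rfl fun a _ => ?_
    cases h : a i <;> simp [h]
  cases b
  · simp only [Bool.false_eq_true, if_false]
    rw [← hsum]
    linear_combination -key
  · simp only [if_true]
    rw [← hsum]
    linear_combination key

lemma Etree_node (p c : Fin n → ℝ) (i : Fin n) (t0 t1 : DTree n)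
    (h0 : ∀ (a : Fin n → Bool) (b : Bool), t0.cost c (Function.update a i b) = t0.cost c a)
    (h1 : ∀ (a : Fin n → Bool) (b : Bool), t1.cost c (Function.update a i b) = t1.cost c a) :
    ∑ a : Fin n → Bool, (DTree.node i t0 t1).cost c a * pr p a
      = c i + (1 - p i) * (∑ a : Fin n → Bool, t0.cost c a * pr p a)
        + p i * (∑ a : Fin n → Bool, t1.cost c a * pr p a) := by
  have expand : ∀ a : Fin n → Bool, (DTree.node i t0 t1).cost c a * pr p a
      = c i * pr p a + ((if a i = true then t1.cost c a else 0) * pr p a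
        + (if a i = false then t0.cost c a else 0) * pr p a) := by
    intro a
    cases h : a i <;> simp [DTree.cost, h] <;> ring
  rw [Finset.sum_congr rfl fun a _ => expand a, Finset.sum_add_distrib, Finset.sum_add_distrib,
    ← Finset.mul_sum, sum_pr p, condSum p i _ h1 true, condSum p i _ h0 false]
  simp only [if_true, if_false, Bool.false_eq_true]
  ring


lemma chainCost_le_cons_erase (c q : Fin n → ℝ) (hq : ∀ j, 0 ≤ q j) :
    ∀ (l : List (Fin n)), l.Pairwise (fun x y => c x * (1 - q y) ≤ c y * (1 - q x)) →
      ∀ j ∈ l, chainCost c q l ≤ c j + q j * chainCost c q (l.erase j) := by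
  intro l
  induction l with
  | nil => intro _ j hj; simp at hj
  | cons x r ih =>
    intro hPair j hj
    rcases List.pairwise_cons.mp hPair with ⟨hx, hr⟩
    by_cases hjx : j = x
    · subst hjx
      rw [List.erase_cons_head]
      simp [chainCost]
    · have hjr : j ∈ r := by
        rcases List.mem_cons.mp hj with h | h
        · exact absurd h hjx
        · exact h
      have herase : (x :: r).erase j = x :: r.erase j := by
        rw [List.erase_cons, if_neg (by simp [Ne.symm hjx])]
      rw [herase]
      have h1 := ih hr j hjr
      have hhead := hx j hjr
      simp only [chainCost]
      nlinarith [mul_le_mul_of_nonneg_left h1 (hq x), hq j, hq x]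

/-- The "chain" tree: query the listed bits in order as long as they equal `b`;
output 1 on the first bit `≠ b`, and `w` if all listed bits equal `b`. -/
def lineTree (w : ℕ) (b : Bool) : List (Fin n) → DTree n
  | [] => .leaf w
  | j :: r => if b then .node j (.leaf 1) (lineTree w b r)
              else .node j (lineTree w b r) (.leaf 1)

lemma mem_labels_lineTree {w : ℕ} {b : Bool} :
    ∀ {l : List (Fin n)} {k : Fin n}, k ∈ labels (lineTree w b l) → k ∈ l := by
  intro l
  induction l with
  | nil => intro k hk; cases b <;> simp [lineTree, labels] at hk
  | cons j r ih =>
    intro k hk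
    cases b <;> simp only [lineTree, if_true, if_false, Bool.false_eq_true, labels] at hk <;>
    · rcases Finset.mem_insert.mp hk with h | h
      · simp [h]
      · rcases Finset.mem_union.mp h with h' | h'
        all_goals first
          | (exact List.mem_cons_of_mem _ (ih (by simpa [labels] using h')))
          | (exfalso; simpa [labels] using h')

lemma proper_lineTree (w : ℕ) (b : Bool) : ∀ (l : List (Fin n)) (used : Finset (Fin n)),
    l.Nodup → (∀ j ∈ l, j ∉ used) → (lineTree w b l).Proper used := by
  intro l
  induction l with
  | nil => intro used _ _; cases b <;> simp [lineTree, DTree.Proper]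
  | cons j r ih =>
    intro used hnd hdisj
    obtain ⟨hjr, hnd'⟩ := List.nodup_cons.mp hnd
    have hsub : ∀ k ∈ r, k ∉ insert j used := by
      intro k hk
      simp only [Finset.mem_insert, not_or]
      exact ⟨fun h => hjr (h ▸ hk), hdisj k (List.mem_cons_of_mem _ hk)⟩
    cases b
    · simp only [lineTree, Bool.false_eq_true, if_false, DTree.Proper]
      exact ⟨hdisj j (List.mem_cons_self), ih _ hnd' hsub, trivial⟩
    · simp only [lineTree, if_true, DTree.Proper]
      exact ⟨hdisj j (List.mem_cons_self), trivial, ih _ hnd' hsub⟩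

lemma eval_lineTree (w : ℕ) (b : Bool) : ∀ (l : List (Fin n)) (a : Fin n → Bool),
    (lineTree w b l).eval a = if (∀ j ∈ l, a j = b) then w else 1 := by
  intro l
  induction l with
  | nil => intro a; cases b <;> simp [lineTree, DTree.eval]
  | cons j r ih =>
    intro a
    cases b
    · simp only [lineTree, Bool.false_eq_true, if_false, DTree.eval]
      cases h : a j
      · rw [ih]
        simp [List.forall_mem_cons, h]
      · simp [List.forall_mem_cons, h]
    · simp only [lineTree, if_true, DTree.eval]
      cases h : a j
      · simp [List.forall_mem_cons, h]
      · rw [ih]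
        simp [List.forall_mem_cons, h]

lemma Etree_lineTree (p c : Fin n → ℝ) (w : ℕ) (b : Bool) :
    ∀ (l : List (Fin n)), l.Nodup →
      ∑ a : Fin n → Bool, (lineTree w b l).cost c a * pr p a
        = chainCost c (fun j => if b then p j else 1 - p j) l := by
  intro l
  induction l with
  | nil => intro _; cases b <;> simp [lineTree, DTree.cost, chainCost]
  | cons j r ih =>
    intro hnd
    obtain ⟨hjr, hnd'⟩ := List.nodup_cons.mp hnd
    have hlab : j ∉ labels (lineTree w b r) := fun h => hjr (mem_labels_lineTree h)
    have hinv : ∀ (a : Fin n → Bool) (b' : Bool),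
        (lineTree w b r).cost c (Function.update a j b') = (lineTree w b r).cost c a :=
      cost_update c _ j hlab
    have hinvleaf : ∀ (a : Fin n → Bool) (b' : Bool),
        (DTree.leaf 1 : DTree n).cost c (Function.update a j b') = (DTree.leaf 1).cost c a :=
      fun _ _ => rfl
    have hleafE : ∑ a : Fin n → Bool, (DTree.leaf 1 : DTree n).cost c a * pr p a = 0 := by
      simp [DTree.cost]
    cases b
    · have hdef : lineTree w false (j :: r) = DTree.node j (lineTree w false r) (.leaf 1) := by
        simp [lineTree]
      rw [hdef, Etree_node p c j _ _ hinv hinvleaf, ih hnd', hleafE]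
      simp only [chainCost, Bool.false_eq_true, if_false]
      ring
    · have hdef : lineTree w true (j :: r) = DTree.node j (.leaf 1) (lineTree w true r) := by
        simp [lineTree]
      rw [hdef, Etree_node p c j _ _ hinvleaf hinv, ih hnd', hleafE]
      simp only [chainCost, if_true]
      ring


lemma lower_bound (p c : Fin n → ℝ) (hp : ∀ i, 0 < p i ∧ p i < 1) (hc : ∀ i, 0 < c i)
    (b : Bool) (w : ℕ) (hw : w ≠ 1) (t : DTree n) :
    ∀ (used : Finset (Fin n)) (l : List (Fin n)),
      t.Proper used →
      (∀ a, t.eval a = if (∀ j, j ∉ used → a j = b) then w else 1) →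
      l.Nodup → (∀ j, j ∈ l ↔ j ∉ used) →
      l.Pairwise (fun x y => c x * (if b then 1 - p y else p y)
        ≤ c y * (if b then 1 - p x else p x)) →
      chainCost c (fun j => if b then p j else 1 - p j) l
        ≤ ∑ a : Fin n → Bool, t.cost c a * pr p a := by
  induction t with
  | leaf v =>
    intro used l _ heval hnd hmem hpair
    match l, hmem with
    | [], _ => simp [chainCost, DTree.cost]
    | (j :: r), hmem =>
      exfalso
      have hj : j ∉ used := (hmem j).mp (List.mem_cons_self)
      have h1 : v = w := by
        have := heval (fun _ => b)
        simpa [DTree.eval] using this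
      have h2 : v = 1 := by
        have h := heval (Function.update (fun _ => b) j (!b))
        rw [if_neg] at h
        · simpa [DTree.eval] using h
        · intro hall
          have := hall j hj
          simp at this
      omega
  | node i t0 t1 ih0 ih1 =>
    intro used l hP heval hnd hmem hpair
    simp only [DTree.Proper] at hP
    obtain ⟨hi, hP0, hP1⟩ := hP
    have hil : i ∈ l := (hmem i).mpr hi
    have hlab0 : i ∉ labels t0 := proper_labels t0 _ hP0 i (Finset.mem_insert_self i used)
    have hlab1 : i ∉ labels t1 := proper_labels t1 _ hP1 i (Finset.mem_insert_self i used)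
    have hrec := Etree_node p c i t0 t1 (cost_update c t0 i hlab0) (cost_update c t1 i hlab1)
    have hnd' : (l.erase i).Nodup := hnd.erase i
    have hmem' : ∀ j, j ∈ l.erase i ↔ j ∉ insert i used := by
      intro j
      rw [hnd.mem_erase_iff, hmem, Finset.mem_insert]
      tauto
    have hpair' := hpair.sublist (List.erase_sublist (a := i) (l := l))
    have hq0 : ∀ j, (0:ℝ) ≤ (if b then p j else 1 - p j) := by
      intro j; rcases hp j with ⟨ha, hb⟩; cases b <;> simp <;> linarith
    have hpair2 : l.Pairwise (fun x y => c x * (1 - (if b then p y else 1 - p y))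
        ≤ c y * (1 - (if b then p x else 1 - p x))) := by
      refine hpair.imp ?_
      intro x y h
      have e : ∀ z : Fin n, (1 - (if b then p z else 1 - p z)) = (if b then 1 - p z else p z) := by
        intro z; cases b <;> simp <;> ring
      rw [e, e]; exact h
    have hexch := chainCost_le_cons_erase c _ hq0 l hpair2 i hil
    have hE0 := Etree_nonneg p c hp hc t0
    have hE1 := Etree_nonneg p c hp hc t1
    rcases hp i with ⟨hpi1, hpi2⟩
    cases b
    · -- b = false : relevant subtree is t0
      have heval0 : ∀ a, t0.eval a =
          if (∀ j, j ∉ insert i used → a j = false) then w else 1 := by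
        intro a
        have e1 : t0.eval a = t0.eval (Function.update a i false) :=
          (eval_update t0 i hlab0 a false).symm
        have e2 : t0.eval (Function.update a i false)
            = (DTree.node i t0 t1).eval (Function.update a i false) := by
          simp [DTree.eval]
        rw [e1, e2, heval]
        have hcond : (∀ j, j ∉ used → (Function.update a i false) j = false)
            ↔ (∀ j, j ∉ insert i used → a j = false) := by
          constructor
          · intro h j hj
            rw [Finset.mem_insert, not_or] at hj
            have := h j hj.2
            rwa [Function.update_of_ne hj.1] at this
          · intro h j hj
            by_cases hji : j = i
            · subst hji; simp
            · rw [Function.update_of_ne hji]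
              exact h j (by simp [Finset.mem_insert, hji, hj])
        simp only [hcond]
      have hIH := ih0 (insert i used) (l.erase i) hP0 heval0 hnd' hmem' hpair'
      simp only [Bool.false_eq_true, if_false] at hexch hIH hq0 ⊢
      rw [hrec]
      have hm := mul_le_mul_of_nonneg_left hIH (hq0 i)
      have hpos : 0 ≤ p i * ∑ a : Fin n → Bool, t1.cost c a * pr p a :=
        mul_nonneg hpi1.le hE1
      linarith
    · -- b = true : relevant subtree is t1
      have heval1 : ∀ a, t1.eval a =
          if (∀ j, j ∉ insert i used → a j = true) then w else 1 := by
        intro a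
        have e1 : t1.eval a = t1.eval (Function.update a i true) :=
          (eval_update t1 i hlab1 a true).symm
        have e2 : t1.eval (Function.update a i true)
            = (DTree.node i t0 t1).eval (Function.update a i true) := by
          simp [DTree.eval]
        rw [e1, e2, heval]
        have hcond : (∀ j, j ∉ used → (Function.update a i true) j = true)
            ↔ (∀ j, j ∉ insert i used → a j = true) := by
          constructor
          · intro h j hj
            rw [Finset.mem_insert, not_or] at hj
            have := h j hj.2
            rwa [Function.update_of_ne hj.1] at this
          · intro h j hj
            by_cases hji : j = i
            · subst hji; simp
            · rw [Function.update_of_ne hji]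
              exact h j (by simp [Finset.mem_insert, hji, hj])
        simp only [hcond]
      have hIH := ih1 (insert i used) (l.erase i) hP1 heval1 hnd' hmem' hpair'
      simp only [if_true] at hexch hIH hq0 ⊢
      rw [hrec]
      have hm := mul_le_mul_of_nonneg_left hIH (hq0 i)
      have hpos : 0 ≤ (1 - p i) * ∑ a : Fin n → Bool, t0.cost c a * pr p a :=
        mul_nonneg (by linarith) hE0
      linarith

end UVaux

theorem stmt12 {n : ℕ} (hn : 2 ≤ n) (p c : Fin n → ℝ)
    (hp : ∀ i, 0 < p i ∧ p i < 1) (hc : ∀ i, 0 < c i)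
    (L L' : Fin n → List (Fin n))
    (hL : ∀ i, (L i).Nodup ∧ (∀ j, j ∈ L i ↔ j ≠ i) ∧
      (L i).Pairwise (fun a b => c a / p a ≤ c b / p b))
    (hL' : ∀ i, (L' i).Nodup ∧ (∀ j, j ∈ L' i ↔ j ≠ i) ∧
      (L' i).Pairwise (fun a b => c a / (1 - p a) ≤ c b / (1 - p b))) :
    OPTcost p c uvote =
      Finset.univ.inf' ⟨⟨0, by omega⟩, Finset.mem_univ _⟩
        (fun i => c i + (1 - p i) * chainCost c (fun j => 1 - p j) (L i)
          + p i * chainCost c p (L' i)) := by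
  classical
  have hne : (Finset.univ : Finset (Fin n)).Nonempty := ⟨⟨0, by omega⟩, Finset.mem_univ _⟩
  set f : Fin n → ℝ := fun i => c i + (1 - p i) * chainCost c (fun j => 1 - p j) (L i)
      + p i * chainCost c p (L' i) with hf
  have hq2 : ∀ j, (0:ℝ) < 1 - p j := fun j => by linarith [(hp j).2]
  -- the candidate optimal trees
  set T : Fin n → DTree n := fun i =>
    DTree.node i (UVaux.lineTree 0 false (L i)) (UVaux.lineTree 2 true (L' i)) with hT
  have hTproper : ∀ i, (T i).Proper ∅ := by
    intro i
    refine ⟨Finset.notMem_empty i, ?_, ?_⟩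
    · exact UVaux.proper_lineTree 0 false (L i) _ (hL i).1
        (fun j hj => by simpa using ((hL i).2.1 j).mp hj)
    · exact UVaux.proper_lineTree 2 true (L' i) _ (hL' i).1
        (fun j hj => by simpa using ((hL' i).2.1 j).mp hj)
  have hTeval : ∀ i a, (T i).eval a = uvote a := by
    intro i a
    show (DTree.node i (UVaux.lineTree 0 false (L i)) (UVaux.lineTree 2 true (L' i))).eval a
      = uvote a
    simp only [DTree.eval]
    unfold uvote
    cases h : a i
    · simp only [Bool.false_eq_true, if_false]
      rw [UVaux.eval_lineTree]
      have hnt : ¬ (∀ j : Fin n, a j = true) := fun hall => by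
        have hx := hall i; rw [h] at hx; exact Bool.false_ne_true hx
      rw [if_neg hnt]
      by_cases hallf : ∀ j : Fin n, a j = false
      · have hc1 : ∀ j ∈ L i, a j = false := fun j _ => hallf j
        rw [if_pos hc1, if_pos hallf]
      · have hc1 : ¬ ∀ j ∈ L i, a j = false := fun hcond => hallf (fun j => by
          by_cases hji : j = i
          · subst hji; exact h
          · exact hcond j (((hL i).2.1 j).mpr hji))
        rw [if_neg hc1, if_neg hallf]
    · simp only [if_true]
      rw [UVaux.eval_lineTree]
      by_cases hall : ∀ j : Fin n, a j = true
      · have hc1 : ∀ j ∈ L' i, a j = true := fun j _ => hall j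
        rw [if_pos hc1, if_pos hall]
      · have hc1 : ¬ ∀ j ∈ L' i, a j = true := fun hcond => hall (fun j => by
          by_cases hji : j = i
          · subst hji; exact h
          · exact hcond j (((hL' i).2.1 j).mpr hji))
        have hnf : ¬ (∀ j : Fin n, a j = false) := fun hallf => by
          have hx := hallf i; rw [h] at hx; simp at hx
        rw [if_neg hc1, if_neg hall, if_neg hnf]
  have hTE : ∀ i, ∑ a : Fin n → Bool, (T i).cost c a * pr p a = f i := by
    intro i
    have hlabL : i ∉ UVaux.labels (UVaux.lineTree 0 false (L i)) :=
      fun h => (((hL i).2.1 i).mp (UVaux.mem_labels_lineTree h)) rfl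
    have hlabL' : i ∉ UVaux.labels (UVaux.lineTree 2 true (L' i)) :=
      fun h => (((hL' i).2.1 i).mp (UVaux.mem_labels_lineTree h)) rfl
    show ∑ a : Fin n → Bool,
        (DTree.node i (UVaux.lineTree 0 false (L i)) (UVaux.lineTree 2 true (L' i))).cost c a
          * pr p a = f i
    rw [UVaux.Etree_node p c i _ _ (UVaux.cost_update c _ i hlabL) (UVaux.cost_update c _ i hlabL'),
      UVaux.Etree_lineTree p c 0 false (L i) (hL i).1,
      UVaux.Etree_lineTree p c 2 true (L' i) (hL' i).1, hf]
    simp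
  -- lower bound: every admissible tree costs at least the claimed minimum
  have hLow : ∀ x ∈ {x : ℝ | ∃ T : DTree n, T.Proper ∅ ∧ (∀ a, T.eval a = uvote a) ∧
      x = ∑ a : Fin n → Bool, T.cost c a * pr p a}, Finset.univ.inf' hne f ≤ x := by
    rintro x ⟨t, hPt, hEv, rfl⟩
    cases t with
    | leaf v =>
      exfalso
      have h2 : v = 2 := by
        have h := hEv (fun _ => true)
        rw [show uvote (fun _ : Fin n => true) = 2 from by simp [uvote]] at h
        exact h
      have h0 : v = 0 := by
        have h := hEv (fun _ => false)
        rw [show uvote (fun _ : Fin n => false) = 0 from by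
          unfold uvote
          rw [if_neg (fun hh => by simpa using hh ⟨0, by omega⟩), if_pos (fun _ => rfl)]] at h
        exact h
      omega
    | node i t0 t1 =>
      simp only [DTree.Proper] at hPt
      obtain ⟨hi, hP0, hP1⟩ := hPt
      have hlab0 : i ∉ UVaux.labels t0 :=
        UVaux.proper_labels t0 _ hP0 i (Finset.mem_insert_self i ∅)
      have hlab1 : i ∉ UVaux.labels t1 :=
        UVaux.proper_labels t1 _ hP1 i (Finset.mem_insert_self i ∅)
      have hrec := UVaux.Etree_node p c i t0 t1
        (UVaux.cost_update c t0 i hlab0) (UVaux.cost_update c t1 i hlab1)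
      -- false subtree computes "OR of the others"
      have heval0 : ∀ a, t0.eval a =
          if (∀ j, j ∉ insert i (∅ : Finset (Fin n)) → a j = false) then 0 else 1 := by
        intro a
        have e1 : t0.eval a = t0.eval (Function.update a i false) :=
          (UVaux.eval_update t0 i hlab0 a false).symm
        have e2 : t0.eval (Function.update a i false)
            = (DTree.node i t0 t1).eval (Function.update a i false) := by
          simp [DTree.eval]
        rw [e1, e2, hEv]
        unfold uvote
        have hnt : ¬ ∀ j : Fin n, Function.update a i false j = true := fun hall => by
          simpa using hall i
        rw [if_neg hnt]
        have hcond : (∀ j, Function.update a i false j = false)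
            ↔ (∀ j, j ∉ insert i (∅ : Finset (Fin n)) → a j = false) := by
          constructor
          · intro h j hj
            simp only [Finset.mem_insert, Finset.notMem_empty, or_false] at hj
            have := h j
            rwa [Function.update_of_ne hj] at this
          · intro h j
            by_cases hji : j = i
            · subst hji; simp
            · rw [Function.update_of_ne hji]
              exact h j (by simp [hji])
        simp only [hcond]
      -- true subtree computes "AND of the others"
      have heval1 : ∀ a, t1.eval a =
          if (∀ j, j ∉ insert i (∅ : Finset (Fin n)) → a j = true) then 2 else 1 := by
        intro a
        have e1 : t1.eval a = t1.eval (Function.update a i true) :=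
          (UVaux.eval_update t1 i hlab1 a true).symm
        have e2 : t1.eval (Function.update a i true)
            = (DTree.node i t0 t1).eval (Function.update a i true) := by
          simp [DTree.eval]
        rw [e1, e2, hEv]
        unfold uvote
        have hcond : (∀ j, Function.update a i true j = true)
            ↔ (∀ j, j ∉ insert i (∅ : Finset (Fin n)) → a j = true) := by
          constructor
          · intro h j hj
            simp only [Finset.mem_insert, Finset.notMem_empty, or_false] at hj
            have := h j
            rwa [Function.update_of_ne hj] at this
          · intro h j
            by_cases hji : j = i
            · subst hji; simp
            · rw [Function.update_of_ne hji]
              exact h j (by simp [hji])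
        by_cases hAll : ∀ j, j ∉ insert i (∅ : Finset (Fin n)) → a j = true
        · rw [if_pos (hcond.mpr hAll), if_pos hAll]
        · rw [if_neg (fun h => hAll (hcond.mp h)), if_neg hAll,
            if_neg (fun hallf => by simpa using hallf i)]
      have hmem0 : ∀ j, j ∈ L i ↔ j ∉ insert i (∅ : Finset (Fin n)) := by
        intro j; rw [(hL i).2.1 j]; simp
      have hmem1 : ∀ j, j ∈ L' i ↔ j ∉ insert i (∅ : Finset (Fin n)) := by
        intro j; rw [(hL' i).2.1 j]; simp
      have hpairF : (L i).Pairwise (fun x y => c x * (if (false : Bool) then 1 - p y else p y)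
          ≤ c y * (if (false : Bool) then 1 - p x else p x)) := by
        refine (hL i).2.2.imp ?_
        intro x y h
        simpa using (div_le_div_iff₀ (hp x).1 (hp y).1).mp h
      have hpairT : (L' i).Pairwise (fun x y => c x * (if (true : Bool) then 1 - p y else p y)
          ≤ c y * (if (true : Bool) then 1 - p x else p x)) := by
        refine (hL' i).2.2.imp ?_
        intro x y h
        simpa using (div_le_div_iff₀ (hq2 x) (hq2 y)).mp h
      have hlow0 : chainCost c (fun j => 1 - p j) (L i)
          ≤ ∑ a : Fin n → Bool, t0.cost c a * pr p a := by
        simpa using UVaux.lower_bound p c hp hc false 0 (by omega) t0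
          (insert i ∅) (L i) hP0 heval0 (hL i).1 hmem0 hpairF
      have hlow1 : chainCost c p (L' i)
          ≤ ∑ a : Fin n → Bool, t1.cost c a * pr p a := by
        simpa using UVaux.lower_bound p c hp hc true 2 (by omega) t1
          (insert i ∅) (L' i) hP1 heval1 (hL' i).1 hmem1 hpairT
      refine le_trans (Finset.inf'_le f (Finset.mem_univ i)) ?_
      rw [hrec, hf]
      have hm0 := mul_le_mul_of_nonneg_left hlow0 (le_of_lt (hq2 i))
      have hm1 := mul_le_mul_of_nonneg_left hlow1 (le_of_lt (hp i).1)
      simp only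
      linarith
  obtain ⟨i₀, -, hmin⟩ := Finset.exists_mem_eq_inf' hne f
  have hmemS : f i₀ ∈ {x : ℝ | ∃ T : DTree n, T.Proper ∅ ∧ (∀ a, T.eval a = uvote a) ∧
      x = ∑ a : Fin n → Bool, T.cost c a * pr p a} :=
    ⟨T i₀, hTproper i₀, hTeval i₀, (hTE i₀).symm⟩
  show sInf _ = Finset.univ.inf' hne f
  apply le_antisymm
  · rw [hmin]
    exact csInf_le ⟨Finset.univ.inf' hne f, hLow⟩ hmemS
  · exact le_csInf ⟨f i₀, hmemS⟩ hLow
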